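/- For every three-qubit pure state ψ, the trace identity Tr(ρ_AB · ρ̃_AB) + Tr(ρ_AS · ρ̃_AS) = 4·det ρ_A holds, where ρ̃ denotes the spin flip of the corresponding reduced density matrix; equivalently, the sum of these two (real, nonnegative) traces equals the squared concurrence C_{A(BS)}² of ψ across the A|(BS) cut. -/

import Mathlib

open Matrix Complex Kronecker Finset
open scoped ComplexOrder

noncomputable section

abbrev TwoQubitMat := Matrix (Fin 2 × Fin 2) (Fin 2 × Fin 2) ℂ

def sigmaY : Matrix (Fin 2) (Fin 2) ℂ := !![0, -Complex.I; Complex.I, 0]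

def spinFlip (ρ : TwoQubitMat) : TwoQubitMat :=
  (sigmaY ⊗ₖ sigmaY) * ρ.map (starRingEnd ℂ) * (sigmaY ⊗ₖ sigmaY)

def matSqrt {m : Type*} [Fintype m] [DecidableEq m] (M : Matrix m m ℂ) : Matrix m m ℂ :=
  open scoped Classical in
  if h : M.PosSemidef then
    (h.1.eigenvectorUnitary : Matrix m m ℂ) *
      diagonal (RCLike.ofReal ∘ (Real.sqrt ∘ h.1.eigenvalues)) *
      (star h.1.eigenvectorUnitary : Matrix m m ℂ) else 0

def Rmat (ρ : TwoQubitMat) : TwoQubitMat :=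
  matSqrt (matSqrt ρ * spinFlip ρ * matSqrt ρ)

def CoA (ρ : TwoQubitMat) : ℝ := (Rmat ρ).trace.re

def lmin2 (M : Matrix (Fin 2) (Fin 2) ℂ) : ℝ :=
  if h : M.IsHermitian then min (h.eigenvalues 0) (h.eigenvalues 1) else 0

def maxEig4 (M : TwoQubitMat) : ℝ :=
  if h : M.IsHermitian then Finset.univ.sup' Finset.univ_nonempty h.eigenvalues else 0

def Conc (ρ : TwoQubitMat) : ℝ := max 0 (2 * maxEig4 (Rmat ρ) - (Rmat ρ).trace.re)

def eigMultiset (M : TwoQubitMat) : Multiset ℝ :=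
  if h : M.IsHermitian then Finset.univ.val.map h.eigenvalues else 0

def rhoAB (ψ : Fin 2 → Fin 2 → Fin 2 → ℂ) : TwoQubitMat :=
  fun p q => ∑ l, ψ p.1 p.2 l * (starRingEnd ℂ) (ψ q.1 q.2 l)

def rhoAS (ψ : Fin 2 → Fin 2 → Fin 2 → ℂ) : TwoQubitMat :=
  fun p q => ∑ j, ψ p.1 j p.2 * (starRingEnd ℂ) (ψ q.1 j q.2)

def rhoA (ψ : Fin 2 → Fin 2 → Fin 2 → ℂ) : Matrix (Fin 2) (Fin 2) ℂ :=
  fun i i' => ∑ j, ∑ l, ψ i j l * (starRingEnd ℂ) (ψ i' j l)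

private lemma sY00 : sigmaY 0 0 = 0 := rfl
private lemma sY01 : sigmaY 0 1 = -Complex.I := rfl
private lemma sY10 : sigmaY 1 0 = Complex.I := rfl
private lemma sY11 : sigmaY 1 1 = 0 := rfl

private lemma trace_sf (ρ : TwoQubitMat) :
    (ρ * spinFlip ρ).trace =
      ∑ p : Fin 2 × Fin 2, ∑ q : Fin 2 × Fin 2, ∑ r : Fin 2 × Fin 2, ∑ s : Fin 2 × Fin 2,
        ρ p q * (sigmaY q.1 r.1 * sigmaY q.2 r.2 * (starRingEnd ℂ) (ρ r s) *
          (sigmaY s.1 p.1 * sigmaY s.2 p.2)) := by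
  simp only [Matrix.trace, Matrix.diag, Matrix.mul_apply, spinFlip,
    Matrix.kroneckerMap_apply, Matrix.map_apply, Finset.mul_sum, Finset.sum_mul]
  refine Finset.sum_congr rfl fun p _ => Finset.sum_congr rfl fun q _ => ?_
  rw [Finset.sum_comm]

set_option maxHeartbeats 2000000 in
theorem trace_spinflip_identity (ψ : Fin 2 → Fin 2 → Fin 2 → ℂ)
    (hψ : ∑ i, ∑ j, ∑ l, Complex.normSq (ψ i j l) = 1) :
    0 ≤ ((rhoAB ψ) * spinFlip (rhoAB ψ)).trace.re ∧
    0 ≤ ((rhoAS ψ) * spinFlip (rhoAS ψ)).trace.re ∧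
    ((rhoAB ψ) * spinFlip (rhoAB ψ)).trace + ((rhoAS ψ) * spinFlip (rhoAS ψ)).trace =
      4 * (rhoA ψ).det := by
  classical
  have key : ∀ (B00 B01 B11 : ℂ) (ρ : TwoQubitMat),
      (ρ * spinFlip ρ).trace = B00 * (starRingEnd ℂ) B00 + 2 * (B01 * (starRingEnd ℂ) B01)
        + B11 * (starRingEnd ℂ) B11 →
      0 ≤ (ρ * spinFlip ρ).trace.re := by
    intro B00 B01 B11 ρ h
    rw [h]
    simp only [Complex.mul_conj, Complex.add_re, Complex.mul_re, Complex.ofReal_re,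
      Complex.ofReal_im, Complex.re_ofNat, Complex.im_ofNat, mul_zero, zero_mul, sub_zero]
    nlinarith [Complex.normSq_nonneg B00, Complex.normSq_nonneg B01, Complex.normSq_nonneg B11]
  have hAB : ((rhoAB ψ) * spinFlip (rhoAB ψ)).trace =
      (2*(ψ 0 1 0 * ψ 1 0 0 - ψ 0 0 0 * ψ 1 1 0)) * (starRingEnd ℂ) (2*(ψ 0 1 0 * ψ 1 0 0 - ψ 0 0 0 * ψ 1 1 0))
      + 2 * ((ψ 0 1 0 * ψ 1 0 1 + ψ 1 0 0 * ψ 0 1 1 - ψ 0 0 0 * ψ 1 1 1 - ψ 1 1 0 * ψ 0 0 1) *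
          (starRingEnd ℂ) (ψ 0 1 0 * ψ 1 0 1 + ψ 1 0 0 * ψ 0 1 1 - ψ 0 0 0 * ψ 1 1 1 - ψ 1 1 0 * ψ 0 0 1))
      + (2*(ψ 0 1 1 * ψ 1 0 1 - ψ 0 0 1 * ψ 1 1 1)) * (starRingEnd ℂ) (2*(ψ 0 1 1 * ψ 1 0 1 - ψ 0 0 1 * ψ 1 1 1)) := by
    rw [trace_sf]
    simp only [Fintype.sum_prod_type, Fin.sum_univ_two, sY00, sY01, sY10, sY11,
      mul_zero, zero_mul, add_zero, zero_add]
    simp only [rhoAB, Fin.sum_univ_two, map_add, map_sub, _root_.map_mul, map_sum,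
      map_ofNat, Complex.conj_conj]
    ring_nf
    simp only [Complex.I_sq, Complex.I_pow_four]
    ring
  have hAS : ((rhoAS ψ) * spinFlip (rhoAS ψ)).trace =
      (2*(ψ 0 0 1 * ψ 1 0 0 - ψ 0 0 0 * ψ 1 0 1)) * (starRingEnd ℂ) (2*(ψ 0 0 1 * ψ 1 0 0 - ψ 0 0 0 * ψ 1 0 1))
      + 2 * ((ψ 0 0 1 * ψ 1 1 0 + ψ 1 0 0 * ψ 0 1 1 - ψ 0 0 0 * ψ 1 1 1 - ψ 1 0 1 * ψ 0 1 0) *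
          (starRingEnd ℂ) (ψ 0 0 1 * ψ 1 1 0 + ψ 1 0 0 * ψ 0 1 1 - ψ 0 0 0 * ψ 1 1 1 - ψ 1 0 1 * ψ 0 1 0))
      + (2*(ψ 0 1 1 * ψ 1 1 0 - ψ 0 1 0 * ψ 1 1 1)) * (starRingEnd ℂ) (2*(ψ 0 1 1 * ψ 1 1 0 - ψ 0 1 0 * ψ 1 1 1)) := by
    rw [trace_sf]
    simp only [Fintype.sum_prod_type, Fin.sum_univ_two, sY00, sY01, sY10, sY11,
      mul_zero, zero_mul, add_zero, zero_add]
    simp only [rhoAS, Fin.sum_univ_two, map_add, map_sub, _root_.map_mul, map_sum,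
      map_ofNat, Complex.conj_conj]
    ring_nf
    simp only [Complex.I_sq, Complex.I_pow_four]
    ring
  refine ⟨key _ _ _ _ hAB, key _ _ _ _ hAS, ?_⟩
  rw [hAB, hAS, Matrix.det_fin_two]
  simp only [rhoA, Fin.sum_univ_two, map_sum, _root_.map_mul, map_sub, map_add,
    map_ofNat, Complex.conj_conj]
  ring
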